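/- Let ϑₙ = π(1 − 2⁻ⁿ), ζₙ = e^{iϑₙ}, uₙ(z) = Re((ζₙ + z)/(ζₙ − z)), γ = (γₙ) ∈ ℓ¹, and u = Σₙ γₙ uₙ. Then for every ζ = e^{iΘ} ∈ ∂𝔻 with Θ ∈ (0, 2π), Θ ≠ π, and Θ ≠ ϑₙ for all n ≥ 1, the function u has nontangential limit 0 at ζ; more precisely, for every c > 0 there are C < ∞ and r₀ ∈ (0,1) such that |u(r e^{iϑ})| ≤ C ‖γ‖₁ (1 − r) whenever r ∈ (r₀, 1) and |ϑ − Θ| < c(1 − r). -/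

import Mathlib

open Complex MeasureTheory Filter Set

noncomputable section

def HasNTLimit (u : ℂ → ℝ) (ζ : ℂ) (L : ℝ) : Prop :=
  ∀ c : ℝ, 0 < c →
    Filter.Tendsto u
      (nhdsWithin ζ {z : ℂ | ‖z‖ < 1 ∧ ‖z - ζ‖ ≤ c * (1 - ‖z‖)})
      (nhds L)

/-- `ϑₙ = π(1 - 2⁻⁽ⁿ⁺¹⁾)` (indexing from `n = 0`, so this is the paper's `ϑ_{n+1}`). -/
def theta (n : ℕ) : ℝ := Real.pi * (1 - (1 / 2 : ℝ) ^ (n + 1))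

def zeta (n : ℕ) : ℂ := Complex.exp (theta n * Complex.I)

def uP (n : ℕ) (z : ℂ) : ℝ := ((zeta n + z) / (zeta n - z)).re

lemma abs_zeta (n : ℕ) : ‖zeta n‖ = 1 := by
  simp [zeta, Complex.norm_exp_ofReal_mul_I]

lemma uP_eq (n : ℕ) (z : ℂ) :
    uP n z = (1 - Complex.normSq z) / Complex.normSq (zeta n - z) := by
  have hw : Complex.normSq (zeta n) = 1 := by
    rw [Complex.normSq_eq_norm_sq, abs_zeta]; norm_num
  rw [Complex.normSq_apply] at hw
  rw [uP, Complex.div_re, ← add_div]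
  congr 1
  simp only [Complex.add_re, Complex.sub_re, Complex.add_im, Complex.sub_im,
    Complex.normSq_apply]
  nlinarith [hw]

lemma abs_uP_le (n : ℕ) (z : ℂ) (hz : Complex.normSq z ≤ 1) (e : ℝ) (he : 0 < e)
    (hd : e ≤ ‖zeta n - z‖) :
    |uP n z| ≤ (1 - Complex.normSq z) / e ^ 2 := by
  rw [uP_eq]
  have h1 : 0 ≤ 1 - Complex.normSq z := by linarith
  have h2 : e ^ 2 ≤ Complex.normSq (zeta n - z) := by
    rw [← Complex.sq_norm]; exact pow_le_pow_left₀ he.le hd 2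
  rw [abs_div, _root_.abs_of_nonneg h1,
    (abs_of_nonneg (Complex.normSq_nonneg _) : |Complex.normSq (zeta n - z)| = _)]
  gcongr

lemma sum_bound (γ : ℕ → ℝ) (hγ : Summable fun n : ℕ => |γ n|)
    (e : ℝ) (he : 0 < e) (z : ℂ) (hz : Complex.normSq z ≤ 1)
    (hn : ∀ n, e ≤ ‖zeta n - z‖) :
    |∑' n : ℕ, γ n * uP n z| ≤ (∑' n : ℕ, |γ n|) * ((1 - Complex.normSq z) / e ^ 2) := by
  set B := (1 - Complex.normSq z) / e ^ 2 with hB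
  have hB0 : 0 ≤ B := div_nonneg (by linarith) (by positivity)
  have hbd : ∀ n, |γ n * uP n z| ≤ |γ n| * B := fun n => by
    rw [abs_mul]
    exact mul_le_mul_of_nonneg_left (abs_uP_le n z hz e he (hn n)) (abs_nonneg _)
  have hs2 : Summable (fun n => |γ n| * B) := Summable.mul_right B hγ
  have hs0 : Summable (fun n => |γ n * uP n z|) :=
    Summable.of_nonneg_of_le (fun n => abs_nonneg _) hbd hs2
  have hs1 : Summable (fun n => γ n * uP n z) := hs0.of_abs
  have habs : ‖∑' n : ℕ, γ n * uP n z‖ ≤ ∑' n : ℕ, ‖γ n * uP n z‖ :=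
    norm_tsum_le_tsum_norm (by simpa only [Real.norm_eq_abs] using hs0)
  rw [Real.norm_eq_abs] at habs
  simp only [Real.norm_eq_abs] at habs
  calc |∑' n : ℕ, γ n * uP n z| ≤ ∑' n : ℕ, |γ n * uP n z| := habs
    _ ≤ ∑' n : ℕ, |γ n| * B := Summable.tsum_le_tsum hbd hs0 hs2
    _ = (∑' n : ℕ, |γ n|) * B := tsum_mul_right

lemma exp_ne_exp (a b : ℝ) (hab : a ≠ b) (h : |a - b| < 2 * Real.pi) :
    Complex.exp (a * Complex.I) ≠ Complex.exp (b * Complex.I) := by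
  intro h'
  rw [Complex.exp_eq_exp_iff_exists_int] at h'
  obtain ⟨k, hk⟩ := h'
  have hI : ((a : ℂ) - b - k * (2 * Real.pi)) * Complex.I = 0 := by
    linear_combination hk
  have h2 : (a : ℂ) - b - k * (2 * Real.pi) = 0 :=
    (mul_eq_zero.mp hI).resolve_right Complex.I_ne_zero
  have h3 : a - b - (k : ℝ) * (2 * Real.pi) = 0 := by exact_mod_cast h2
  have hk0 : k ≠ 0 := by
    rintro rfl; simp at h3; apply hab; linarith
  have h4 : (1 : ℝ) ≤ |(k : ℝ)| := by exact_mod_cast Int.one_le_abs hk0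
  have h5 : |a - b| = |(k : ℝ)| * (2 * Real.pi) := by
    rw [show a - b = (k : ℝ) * (2 * Real.pi) by linarith, abs_mul,
      abs_of_pos (by positivity : (0:ℝ) < 2 * Real.pi)]
  nlinarith [Real.pi_pos]

lemma theta_lt_pi (n : ℕ) : theta n < Real.pi := by
  have h : (0:ℝ) < (1/2 : ℝ) ^ (n+1) := by positivity
  have := Real.pi_pos
  unfold theta; nlinarith

lemma theta_pos (n : ℕ) : 0 < theta n := by
  have h : (1/2 : ℝ) ^ (n+1) ≤ (1/2 : ℝ) ^ 1 :=
    pow_le_pow_of_le_one (by norm_num) (by norm_num) (by omega)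
  have := Real.pi_pos
  unfold theta; nlinarith

lemma exists_delta (Θ : ℝ) (hΘ0 : 0 < Θ) (hΘ2 : Θ < 2 * Real.pi) (hΘπ : Θ ≠ Real.pi)
    (hΘn : ∀ n : ℕ, Θ ≠ theta n) :
    ∃ δ : ℝ, 0 < δ ∧ ∀ n : ℕ, δ ≤ ‖Complex.exp (Θ * Complex.I) - zeta n‖ := by
  have hπ := Real.pi_pos
  set ζ := Complex.exp (Θ * Complex.I) with hζ
  set f : ℕ → ℝ := fun n => ‖ζ - zeta n‖ with hf
  have hne : ∀ n, ζ ≠ zeta n := by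
    intro n
    refine exp_ne_exp Θ (theta n) (hΘn n) ?_
    have h1 := theta_pos n; have h2 := theta_lt_pi n
    rw [abs_sub_lt_iff]; constructor <;> linarith
  have hpos : ∀ n, 0 < f n := fun n =>
    norm_pos_iff.mpr (sub_ne_zero.mpr (hne n))
  have hlt : Tendsto theta atTop (nhds Real.pi) := by
    have h0 : Tendsto (fun n : ℕ => ((1:ℝ)/2) ^ (n+1)) atTop (nhds 0) :=
      (tendsto_pow_atTop_nhds_zero_of_lt_one (by norm_num) (by norm_num)).comp
        (tendsto_add_atTop_nat 1)
    have h1 : Tendsto (fun n : ℕ => Real.pi * (1 - ((1:ℝ)/2) ^ (n+1))) atTop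
        (nhds (Real.pi * (1 - 0))) :=
      ((tendsto_const_nhds (x := (1:ℝ))).sub h0).const_mul Real.pi
    norm_num at h1
    exact h1
  have hz : Tendsto zeta atTop (nhds (Complex.exp (Real.pi * Complex.I))) := by
    have hc : Continuous fun x : ℝ => Complex.exp (x * Complex.I) :=
      Complex.continuous_exp.comp (by continuity)
    exact (hc.tendsto Real.pi).comp hlt
  have hft : Tendsto f atTop (nhds (‖ζ - Complex.exp (Real.pi * Complex.I)‖)) := by
    have hc : Continuous fun w : ℂ => ‖ζ - w‖ :=
      continuous_norm.comp (continuous_const.sub continuous_id)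
    exact (hc.tendsto _).comp hz
  set d := ‖ζ - Complex.exp (Real.pi * Complex.I)‖ with hd
  have hd0 : 0 < d := by
    apply norm_pos_iff.mpr
    apply sub_ne_zero.mpr
    refine exp_ne_exp Θ Real.pi hΘπ ?_
    rw [abs_sub_lt_iff]; constructor <;> linarith
  have hev : ∀ᶠ n in atTop, d / 2 < f n :=
    hft.eventually (eventually_gt_nhds (by linarith))
  obtain ⟨N, hN⟩ := eventually_atTop.mp hev
  set s : Finset ℝ := insert (d/2) ((Finset.range N).image f) with hs
  have hsne : s.Nonempty := Finset.insert_nonempty _ _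
  refine ⟨s.min' hsne, ?_, ?_⟩
  · rw [Finset.lt_min'_iff]
    intro y hy
    rw [hs, Finset.mem_insert, Finset.mem_image] at hy
    rcases hy with rfl | ⟨n, _, rfl⟩
    · linarith
    · exact hpos n
  · intro n
    by_cases hn : n < N
    · exact Finset.min'_le _ _ (by
        rw [hs, Finset.mem_insert, Finset.mem_image]
        exact Or.inr ⟨n, Finset.mem_range.mpr hn, rfl⟩)
    · calc s.min' hsne ≤ d/2 := Finset.min'_le _ _ (by simp [hs])
        _ ≤ f n := (hN n (by omega)).le

lemma chord (a b : ℝ) (h : |a - b| ≤ 1) :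
    ‖Complex.exp (a * Complex.I) - Complex.exp (b * Complex.I)‖ ≤ 2 * |a - b| := by
  have he : Complex.exp (a * Complex.I) - Complex.exp (b * Complex.I)
      = Complex.exp (b * Complex.I) * (Complex.exp (((a - b : ℝ)) * Complex.I) - 1) := by
    rw [mul_sub, mul_one, ← Complex.exp_add]
    congr 2
    push_cast; ring
  have habs : ‖((a - b : ℝ) : ℂ) * Complex.I‖ = |a - b| := by
    rw [norm_mul, Complex.norm_I, mul_one, Complex.norm_real, Real.norm_eq_abs]
  have h2 := Complex.norm_exp_sub_one_le (x := ((a - b : ℝ) : ℂ) * Complex.I)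
    (by rw [habs]; exact h)
  rw [he, norm_mul, Complex.norm_exp_ofReal_mul_I, one_mul]
  rw [habs] at h2
  exact h2

/-- For `γ ∈ ℓ¹` and `u = Σ γₙ uₙ`: at every boundary point `ζ = e^{iΘ}` with
`Θ ∈ (0, 2π)`, `Θ ≠ π`, `Θ ≠ ϑₙ` for all `n`, the function `u` has nontangential
limit `0`; more precisely, for every `c > 0` there are `C < ∞` and `r₀ ∈ (0,1)` with
`|u(r e^{iϑ})| ≤ C ‖γ‖₁ (1 - r)` whenever `r ∈ (r₀, 1)` and `|ϑ - Θ| < c (1 - r)`. -/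
theorem sum_has_nontangential_limit_zero (γ : ℕ → ℝ)
    (hγ : Summable fun n : ℕ => |γ n|)
    (u : ℂ → ℝ) (hu : u = fun z : ℂ => ∑' n : ℕ, γ n * uP n z)
    (Θ : ℝ) (hΘ0 : 0 < Θ) (hΘ2 : Θ < 2 * Real.pi) (hΘπ : Θ ≠ Real.pi)
    (hΘn : ∀ n : ℕ, Θ ≠ theta n) :
    HasNTLimit u (Complex.exp (Θ * Complex.I)) 0 ∧
    ∀ c : ℝ, 0 < c → ∃ C : ℝ, ∃ r₀ : ℝ, r₀ ∈ Set.Ioo (0 : ℝ) 1 ∧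
      ∀ r : ℝ, r ∈ Set.Ioo r₀ 1 → ∀ ϑ : ℝ, |ϑ - Θ| < c * (1 - r) →
        |u ((r : ℂ) * Complex.exp (ϑ * Complex.I))|
          ≤ C * (∑' n : ℕ, |γ n|) * (1 - r) := by
  obtain ⟨δ, hδ0, hδ⟩ := exists_delta Θ hΘ0 hΘ2 hΘπ hΘn
  have hπ := Real.pi_pos
  set ζ : ℂ := Complex.exp (Θ * Complex.I) with hζdef
  have hζ1 : ‖ζ‖ = 1 := Complex.norm_exp_ofReal_mul_I Θ
  have hT0 : 0 ≤ ∑' n : ℕ, |γ n| := tsum_nonneg (fun n => abs_nonneg _)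
  have hkey : ∀ z : ℂ, ‖z‖ ≤ 1 → ‖z - ζ‖ ≤ δ/2 →
      |u z| ≤ (∑' n : ℕ, |γ n|) * ((1 - Complex.normSq z) / (δ/2) ^ 2) := by
    intro z hz1 hz2
    rw [hu]
    refine sum_bound γ hγ (δ/2) (by positivity) z ?_ ?_
    · rw [← Complex.sq_norm]; nlinarith [norm_nonneg z]
    · intro n
      have h1 := hδ n
      have h2 : ‖ζ - zeta n‖ ≤ ‖ζ - z‖ + ‖z - zeta n‖ :=
        norm_sub_le_norm_sub_add_norm_sub ζ z (zeta n)
      have h3 : ‖ζ - z‖ = ‖z - ζ‖ := norm_sub_rev _ _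
      have h4 : ‖zeta n - z‖ = ‖z - zeta n‖ := norm_sub_rev _ _
      rw [h4]
      rw [h3] at h2
      linarith
  constructor
  · intro c hc
    have hball : ∀ᶠ z in nhdsWithin ζ
        {z : ℂ | ‖z‖ < 1 ∧ ‖z - ζ‖ ≤ c * (1 - ‖z‖)},
        ‖z - ζ‖ < δ/2 := by
      refine Filter.eventually_of_mem
        (nhdsWithin_le_nhds (Metric.ball_mem_nhds ζ (show (0:ℝ) < δ/2 by positivity))) ?_
      intro z hz
      simpa [Complex.dist_eq] using hz
    have hmem : ∀ᶠ z in nhdsWithin ζ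
        {z : ℂ | ‖z‖ < 1 ∧ ‖z - ζ‖ ≤ c * (1 - ‖z‖)},
        z ∈ {z : ℂ | ‖z‖ < 1 ∧ ‖z - ζ‖ ≤ c * (1 - ‖z‖)} :=
      eventually_mem_nhdsWithin
    refine squeeze_zero_norm'
      (a := fun z : ℂ => (∑' n : ℕ, |γ n|) * ((1 - Complex.normSq z) / (δ/2) ^ 2)) ?_ ?_
    · filter_upwards [hball, hmem] with z h1 h2
      rw [Real.norm_eq_abs]
      exact hkey z h2.1.le h1.le
    · have hgc : Continuous fun z : ℂ =>
          (∑' n : ℕ, |γ n|) * ((1 - Complex.normSq z) / (δ/2) ^ 2) :=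
        continuous_const.mul ((continuous_const.sub Complex.continuous_normSq).div_const _)
      have hg := (hgc.tendsto ζ).mono_left (nhdsWithin_le_nhds
        (s := {z : ℂ | ‖z‖ < 1 ∧ ‖z - ζ‖ ≤ c * (1 - ‖z‖)}))
      have h0 : (∑' n : ℕ, |γ n|) * ((1 - Complex.normSq ζ) / (δ/2) ^ 2) = 0 := by
        have hns : Complex.normSq ζ = 1 := by rw [Complex.normSq_eq_norm_sq, hζ1]; norm_num
        rw [hns]; simp
      rw [h0] at hg
      exact hg
  · intro c hc
    have hc1 : (0:ℝ) < 1 + 2*c := by linarith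
    set ε := min (min (1/2 : ℝ) (1/(c+1))) (δ/(2*(1+2*c))) with hεdef
    have hε0 : 0 < ε := lt_min (lt_min one_half_pos (by positivity)) (by positivity)
    have hεhalf : ε ≤ 1/2 := le_trans (min_le_left _ _) (min_le_left _ _)
    have hεc : ε ≤ 1/(c+1) := le_trans (min_le_left _ _) (min_le_right _ _)
    have hεδ : ε ≤ δ/(2*(1+2*c)) := min_le_right _ _
    refine ⟨8/δ^2, 1 - ε, ⟨by linarith, by linarith⟩, ?_⟩
    intro r hr ϑ hϑ
    obtain ⟨hr1, hr2⟩ := hr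
    have h1r : 1 - r < ε := by linarith
    have hr0 : 0 < r := by linarith
    set z : ℂ := (r : ℂ) * Complex.exp (ϑ * Complex.I) with hzdef
    have habsz : ‖z‖ = r := by
      rw [hzdef, norm_mul, Complex.norm_real, Complex.norm_exp_ofReal_mul_I, mul_one, Real.norm_eq_abs,
        abs_of_pos hr0]
    have hϑΘ1 : |ϑ - Θ| ≤ 1 := by
      have ha : c * (1 - r) < c * ε := mul_lt_mul_of_pos_left h1r hc
      have hb : c * ε ≤ c * (1/(c+1)) := mul_le_mul_of_nonneg_left hεc hc.le
      have hcc : c * (1/(c+1)) < 1 := by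
        rw [mul_one_div, div_lt_one (by linarith)]; linarith
      linarith
    have hch := chord ϑ Θ hϑΘ1
    have hz1 : ‖z - Complex.exp (ϑ * Complex.I)‖ = 1 - r := by
      have he : z - Complex.exp (ϑ * Complex.I)
          = ((r - 1 : ℝ) : ℂ) * Complex.exp (ϑ * Complex.I) := by
        rw [hzdef]; push_cast; ring
      rw [he, norm_mul, Complex.norm_real, Complex.norm_exp_ofReal_mul_I, mul_one, Real.norm_eq_abs,
        abs_of_neg (by linarith : r - 1 < 0)]
      ring
    have hzζ : ‖z - ζ‖ ≤ δ/2 := by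
      have ht : ‖z - ζ‖ ≤ ‖z - Complex.exp (ϑ * Complex.I)‖
          + ‖Complex.exp (ϑ * Complex.I) - ζ‖ :=
        norm_sub_le_norm_sub_add_norm_sub z _ ζ
      have h5 : ‖z - ζ‖ ≤ (1 - r) + 2 * |ϑ - Θ| := by
        rw [hz1] at ht; rw [hζdef]; linarith [hch]
      have h6 : (1 - r) + 2 * |ϑ - Θ| ≤ (1 + 2*c) * (1 - r) := by nlinarith
      have h7 : (1 + 2*c) * (1 - r) ≤ (1 + 2*c) * ε := by nlinarith
      have h8 : (1 + 2*c) * ε ≤ δ/2 := by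
        have := mul_le_mul_of_nonneg_left hεδ hc1.le
        calc (1 + 2*c) * ε ≤ (1 + 2*c) * (δ/(2*(1+2*c))) := this
          _ = δ/2 := by field_simp
      linarith
    have hb := hkey z (by rw [habsz]; linarith) hzζ
    have hnsq : Complex.normSq z = r^2 := by rw [← Complex.sq_norm, habsz]
    rw [hnsq] at hb
    have hfin : (1 - r^2)/((δ/2)^2) ≤ 8/δ^2 * (1 - r) := by
      rw [div_le_iff₀ (by positivity : (0:ℝ) < (δ/2)^2)]
      have hδne : δ ≠ 0 := ne_of_gt hδ0
      field_simp
      nlinarith [sq_nonneg (r - 1), sq_nonneg δ, hδ0]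
    calc |u z| ≤ (∑' n : ℕ, |γ n|) * ((1 - r^2)/((δ/2)^2)) := hb
      _ ≤ (∑' n : ℕ, |γ n|) * (8/δ^2 * (1 - r)) := mul_le_mul_of_nonneg_left hfin hT0
      _ = 8/δ^2 * (∑' n : ℕ, |γ n|) * (1 - r) := by ring

end
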